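/- The function f(x) = [1+(1-δx)²]·(β^α/Γ(α))·x^(α-1)·e^(-βx)/Z integrates to 1 over (0,∞), where Z = 2 + (αδ/β)[(1+α)δ/β - 2]. -/

import Mathlib

open MeasureTheory Real Set

noncomputable def Zc (α β δ : ℝ) : ℝ := 2 + (α * δ / β) * ((1 + α) * δ / β - 2)

noncomputable def bgammaPDF (α β δ x : ℝ) : ℝ :=
  (1 + (1 - δ * x) ^ 2) / Zc α β δ * (β ^ α / Real.Gamma α) * x ^ (α - 1) * Real.exp (-β * x)

noncomputable def gammaPDF (α β x : ℝ) : ℝ :=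
  β ^ α / Real.Gamma α * x ^ (α - 1) * Real.exp (-β * x)

lemma intOnAux (β s : ℝ) (hs : -1 < s) (hβ : 0 < β) :
    IntegrableOn (fun x : ℝ => x ^ s * Real.exp (-β * x)) (Ioi 0) := by
  have h := integrableOn_rpow_mul_exp_neg_mul_rpow hs (zero_lt_one' ℝ) hβ
  exact h.congr_fun (fun x _ => by simp only [Real.rpow_one]) measurableSet_Ioi

theorem bgamma_integral_one (α β δ : ℝ) (hα : 0 < α) (hβ : 0 < β) :
    ∫ x in Ioi (0:ℝ), bgammaPDF α β δ x = 1 := by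
  have hΓ : 0 < Real.Gamma α := Real.Gamma_pos_of_pos hα
  have hZ : 0 < Zc α β δ := by
    have ht : Zc α β δ = α * (1 + α) * (δ / β) ^ 2 - 2 * α * (δ / β) + 2 := by
      unfold Zc; field_simp; ring
    rw [ht]
    nlinarith [sq_nonneg (α * (δ / β) - 1), mul_nonneg hα.le (sq_nonneg (δ / β))]
  have hf0 := intOnAux β (α - 1) (by linarith) hβ
  have hf1 := intOnAux β α (by linarith) hβ
  have hf2 := intOnAux β (α + 1) (by linarith) hβ
  have key : EqOn (fun x => bgammaPDF α β δ x)
      (fun x => β ^ α / Real.Gamma α / Zc α β δ *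
        (2 * (x ^ (α - 1) * Real.exp (-β * x)) + (-2 * δ) * (x ^ α * Real.exp (-β * x))
          + δ ^ 2 * (x ^ (α + 1) * Real.exp (-β * x)))) (Ioi 0) := by
    intro x hx
    have hx0 : (0:ℝ) < x := hx
    have e1 : x ^ α = x ^ (α - 1) * x := by
      rw [← Real.rpow_add_one hx0.ne' (α - 1), sub_add_cancel]
    have e2 : x ^ (α + 1) = x ^ (α - 1) * x * x := by
      rw [Real.rpow_add_one hx0.ne' α, e1]
    simp only [bgammaPDF, e1, e2]
    field_simp
    ring
  have h01 : IntegrableOn (fun x : ℝ => 2 * (x ^ (α - 1) * Real.exp (-β * x))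
      + -2 * δ * (x ^ α * Real.exp (-β * x))) (Ioi 0) :=
    (hf0.const_mul 2).add (hf1.const_mul _)
  rw [setIntegral_congr_fun measurableSet_Ioi key, integral_const_mul,
    integral_add h01 (hf2.const_mul _),
    integral_add (hf0.const_mul 2) (hf1.const_mul _),
    integral_const_mul, integral_const_mul, integral_const_mul]
  have I0 : ∫ x in Ioi (0:ℝ), x ^ (α - 1) * Real.exp (-β * x) = (1 / β) ^ α * Real.Gamma α := by
    simpa [neg_mul] using integral_rpow_mul_exp_neg_mul_Ioi hα hβ
  have I1 : ∫ x in Ioi (0:ℝ), x ^ α * Real.exp (-β * x) = (1 / β) ^ (α + 1) * Real.Gamma (α + 1) := by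
    have := integral_rpow_mul_exp_neg_mul_Ioi (show (0:ℝ) < α + 1 by linarith) hβ
    simpa [neg_mul, add_sub_cancel_right] using this
  have I2 : ∫ x in Ioi (0:ℝ), x ^ (α + 1) * Real.exp (-β * x) = (1 / β) ^ (α + 2) * Real.Gamma (α + 2) := by
    have := integral_rpow_mul_exp_neg_mul_Ioi (show (0:ℝ) < α + 2 by linarith) hβ
    simpa [neg_mul, add_sub_cancel_right, show α + 2 - 1 = α + 1 by ring] using this
  rw [I0, I1, I2]
  have hG1 : Real.Gamma (α + 1) = α * Real.Gamma α := Real.Gamma_add_one hα.ne'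
  have hG2 : Real.Gamma (α + 2) = (α + 1) * (α * Real.Gamma α) := by
    rw [show α + 2 = (α + 1) + 1 by ring, Real.Gamma_add_one (by linarith), hG1]
  have hr1 : (1 / β) ^ (α + 1) = (1 / β) ^ α * (1 / β) := by
    rw [Real.rpow_add_one (by positivity : (1:ℝ)/β ≠ 0)]
  have hr2 : (1 / β) ^ (α + 2) = (1 / β) ^ α * (1 / β) * (1 / β) := by
    rw [show α + 2 = α + 1 + 1 by ring, Real.rpow_add_one (by positivity : (1:ℝ)/β ≠ 0), hr1]
  have hinv : (1 / β) ^ α = (β ^ α)⁻¹ := by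
    rw [one_div, Real.inv_rpow hβ.le]
  have hβα : (0:ℝ) < β ^ α := Real.rpow_pos_of_pos hβ α
  rw [hr1, hr2, hG1, hG2]
  set A := (1 / β) ^ α with hA
  have hE : 2 * (A * Real.Gamma α)
      + -2 * δ * (A * (1 / β) * (α * Real.Gamma α))
      + δ ^ 2 * (A * (1 / β) * (1 / β) * ((α + 1) * (α * Real.Gamma α)))
      = A * Real.Gamma α * Zc α β δ := by
    unfold Zc
    field_simp
    ring
  rw [hE, hinv]
  field_simp
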